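/- Let n > 1 and let P ∈ ℤ[X] be a monic polynomial of degree 2n+1 that splits in ℤ[X] as P = f₀·h, where: f₀ is monic of degree 3, has exactly one real root α, this root satisfies α > 0 and α ≠ 1, and f₀(0) = −1; and h is monic, self-reciprocal, has no real roots, and every irreducible factor of h (in its unique factorization in ℤ[X]) has no multiple complex roots. Then there exists a (2n+1)×(2n+1) integer matrix M with det M = 1, with characteristic polynomial equal to P, and which is diagonalizable over ℂ (i.e., similar over ℂ to a diagonal matrix). -/

import Mathlib

/-!
Statement 10: given a monic integer polynomial `P = f₀·h` of degree `2n+1`, with `f₀`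
monic cubic having exactly one real root `α` with `α > 0`, `α ≠ 1` and `f₀(0) = −1`,
and with `h` monic self-reciprocal without real roots whose irreducible factors have no
multiple complex roots, there is an integer matrix `M` with `det M = 1`, characteristic
polynomial `P`, diagonalizable over `ℂ`.
-/

open Polynomial

-- step 1: eigenbasis → diagonalization
theorem EP_eigb {m : ℕ} (A : Matrix (Fin m) (Fin m) ℂ)
    (b : Module.Basis (Fin m) ℂ (Fin m → ℂ)) (d : Fin m → ℂ)
    (hb : ∀ i, A.mulVec (b i) = d i • b i) :
    ∃ (U : (Matrix (Fin m) (Fin m) ℂ)ˣ) (dd : Fin m → ℂ),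
      A = (U : Matrix _ _ ℂ) * Matrix.diagonal dd * ((U⁻¹ : _ˣ) : Matrix _ _ ℂ) := by
  classical
  set c := Pi.basisFun ℂ (Fin m)
  set V := c.toMatrix b with hV
  have hinv : Invertible V := c.invertibleToMatrix b  -- guess arg order
  have hAV : A * V = V * Matrix.diagonal d := by
    ext i j
    have h1 : (A * V) i j = (A.mulVec (b j)) i := by
      simp [Matrix.mul_apply, Matrix.mulVec, dotProduct, hV, Module.Basis.toMatrix_apply, c]
    rw [h1, hb]
    simp [Matrix.mul_apply, Matrix.diagonal, hV, Module.Basis.toMatrix_apply, c, Finset.sum_ite_eq,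
      mul_comm]
  refine ⟨unitOfInvertible V, d, ?_⟩
  have : A = V * Matrix.diagonal d * ⅟V := by
    rw [← hAV]; simp [Matrix.mul_assoc]
  simpa [unitOfInvertible] using this

theorem EP_diag {m : ℕ} (A : Matrix (Fin m) (Fin m) ℂ) (g : ℂ[X])
    (hg : Squarefree g) (hA : aeval A g = 0) :
    ∃ (U : (Matrix (Fin m) (Fin m) ℂ)ˣ) (dd : Fin m → ℂ),
      A = (U : Matrix _ _ ℂ) * Matrix.diagonal dd * ((U⁻¹ : _ˣ) : Matrix _ _ ℂ) := by
  classical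
  set f : Module.End ℂ (Fin m → ℂ) := Matrix.toLin' A with hf
  have hfa : aeval f g = 0 := by
    have h0 : f = (Matrix.toLinAlgEquiv' (R := ℂ) (n := Fin m)).toAlgHom A := rfl
    rw [h0, Polynomial.aeval_algHom_apply, hA, map_zero]
  rcases Nat.eq_zero_or_pos m with hm | hm
  · subst hm
    exact ⟨1, 0, Subsingleton.elim _ _⟩
  haveI : Nontrivial (Fin m → ℂ) := by
    haveI : NeZero m := ⟨hm.ne'⟩
    infer_instance
  have hss : f.IsSemisimple := Module.End.isSemisimple_of_squarefree_aeval_eq_zero hg hfa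
  have htop : ⨆ μ : ℂ, f.eigenspace μ = ⊤ := by
    have h1 := Module.End.iSup_maxGenEigenspace_eq_top f
    have h2 : ∀ μ : ℂ, f.maxGenEigenspace μ = f.eigenspace μ :=
      fun μ => hss.isFinitelySemisimple.maxGenEigenspace_eq_eigenspace μ
    simpa [h2] using h1
  have hind := Module.End.eigenspaces_iSupIndep f
  have hint : DirectSum.IsInternal (fun μ : ℂ => f.eigenspace μ) :=
    DirectSum.isInternal_submodule_of_iSupIndep_of_iSup_eq_top hind htop
  -- bases of eigenspaces
  let bs : ∀ μ : ℂ, Module.Basis (Fin (Module.finrank ℂ (f.eigenspace μ))) ℂ (f.eigenspace μ) :=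
    fun μ => Module.finBasis ℂ _
  let b0 := hint.collectedBasis bs
  haveI : Fintype (Σ μ : ℂ, Fin (Module.finrank ℂ (f.eigenspace μ))) :=
    FiniteDimensional.fintypeBasisIndex b0
  have hcard : Fintype.card (Σ μ : ℂ, Fin (Module.finrank ℂ (f.eigenspace μ))) = m := by
    have := Module.finrank_eq_card_basis b0
    simpa using this.symm
  let e := Fintype.equivFinOfCardEq hcard
  let b := b0.reindex e
  refine EP_eigb A b (fun i => (e.symm i).1) (fun i => ?_)
  have hmem : b0 (e.symm i) ∈ f.eigenspace (e.symm i).1 :=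
    hint.collectedBasis_mem bs (e.symm i)
  have hbi : b i = b0 (e.symm i) := b0.reindex_apply e i
  have := (Module.End.mem_eigenspace_iff).mp hmem
  rw [hbi]
  simpa [f, Matrix.toLin'_apply] using this

def EPGood (p : ℤ[X]) : Prop :=
  ∃ (ι : Type) (_ : Fintype ι) (_ : DecidableEq ι) (M : Matrix ι ι ℤ),
    M.charpoly = p ∧
    ∃ (U : (Matrix ι ι ℂ)ˣ) (d : ι → ℂ),
      M.map (Int.cast : ℤ → ℂ) =
        (U : Matrix ι ι ℂ) * Matrix.diagonal d * ((U⁻¹ : _ˣ) : Matrix ι ι ℂ)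

theorem EP_minpoly_root (q : ℤ[X]) (hq : q.Monic) (hdeg : 0 < q.natDegree) :
    minpoly ℤ (AdjoinRoot.root q) = q := by
  haveI : Nontrivial (AdjoinRoot q) := AdjoinRoot.nontrivial q (by
    intro h
    exact absurd (natDegree_eq_zero_iff_degree_le_zero.mpr h.le) hdeg.ne')
  have haev : aeval (AdjoinRoot.root q) q = 0 := by
    rw [AdjoinRoot.aeval_eq, AdjoinRoot.mk_self]
  have hint : IsIntegral ℤ (AdjoinRoot.root q) := ⟨q, hq, haev⟩
  have hmono : (minpoly ℤ (AdjoinRoot.root q)).Monic := minpoly.monic hint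
  have hdvd : q ∣ minpoly ℤ (AdjoinRoot.root q) := by
    rw [← AdjoinRoot.mk_eq_zero, ← AdjoinRoot.aeval_eq]
    exact minpoly.aeval ℤ _
  have hle : (minpoly ℤ (AdjoinRoot.root q)).natDegree ≤ q.natDegree :=
    natDegree_le_natDegree (minpoly.min ℤ _ hq haev)
  exact eq_of_monic_of_dvd_of_natDegree_le hq hmono hdvd hle

theorem EP_good_irred (q : ℤ[X]) (hq : q.Monic) (hdeg : 0 < q.natDegree)
    (hsf : Squarefree (q.map (Int.castRingHom ℂ))) : EPGood q := by
  classical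
  let pb := AdjoinRoot.powerBasis' hq
  let M : Matrix (Fin pb.dim) (Fin pb.dim) ℤ := Algebra.leftMulMatrix pb.basis pb.gen
  have hchar : M.charpoly = q := by
    rw [charpoly_leftMulMatrix pb]
    exact EP_minpoly_root q hq hdeg
  have hann : aeval (M.map (Int.cast : ℤ → ℂ)) (q.map (Int.castRingHom ℂ)) = 0 := by
    have h1 : (algebraMap ℤ ℂ) = Int.castRingHom ℂ := by rfl
    rw [← h1, Polynomial.aeval_map_algebraMap]
    have h2 : M.map (Int.cast : ℤ → ℂ) =
        ((Int.castRingHom ℂ).mapMatrix.toIntAlgHom : Matrix (Fin pb.dim) (Fin pb.dim) ℤ →ₐ[ℤ]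
          Matrix (Fin pb.dim) (Fin pb.dim) ℂ) M := rfl
    have h3 : aeval M q = 0 := by simpa [hchar] using Matrix.aeval_self_charpoly M
    rw [h2, Polynomial.aeval_algHom_apply, h3, map_zero]
  obtain ⟨U, dd, hU⟩ := EP_diag (M.map (Int.cast : ℤ → ℂ)) _ hsf hann
  exact ⟨Fin pb.dim, inferInstance, inferInstance, M, hchar, U, dd, hU⟩

theorem EP_good_one : EPGood 1 := by
  refine ⟨Fin 0, inferInstance, inferInstance, 0, ?_, 1, 0, Subsingleton.elim _ _⟩
  rw [Matrix.charpoly]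
  exact Matrix.det_isEmpty

theorem EP_good_mul (p q : ℤ[X]) (hp : EPGood p) (hq : EPGood q) : EPGood (p * q) := by
  classical
  obtain ⟨ι, _, _, Mp, hcp, Up, dp, hUp⟩ := hp
  obtain ⟨κ, _, _, Mq, hcq, Uq, dq, hUq⟩ := hq
  refine ⟨ι ⊕ κ, inferInstance, inferInstance,
    Matrix.fromBlocks Mp 0 0 Mq, ?_, ?_⟩
  · rw [Matrix.charpoly_fromBlocks_zero₁₂, hcp, hcq]
  · refine ⟨⟨Matrix.fromBlocks (Up : Matrix ι ι ℂ) 0 0 (Uq : Matrix κ κ ℂ),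
      Matrix.fromBlocks ((Up⁻¹ : _ˣ) : Matrix ι ι ℂ) 0 0 ((Uq⁻¹ : _ˣ) : Matrix κ κ ℂ), ?_, ?_⟩,
      Sum.elim dp dq, ?_⟩
    · simp [Matrix.fromBlocks_multiply, ← Matrix.fromBlocks_one, Units.mul_inv,
        -Matrix.coe_units_inv]
    · simp [Matrix.fromBlocks_multiply, ← Matrix.fromBlocks_one, Units.inv_mul,
        -Matrix.coe_units_inv]
    · show (Matrix.fromBlocks Mp 0 0 Mq).map _ =
        Matrix.fromBlocks (Up : Matrix ι ι ℂ) 0 0 (Uq : Matrix κ κ ℂ) *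
          Matrix.diagonal (Sum.elim dp dq) *
          Matrix.fromBlocks ((Up⁻¹ : _ˣ) : Matrix ι ι ℂ) 0 0 ((Uq⁻¹ : _ˣ) : Matrix κ κ ℂ)
      rw [← Matrix.fromBlocks_diagonal, Matrix.fromBlocks_multiply,
        Matrix.fromBlocks_multiply]
      simp [Matrix.fromBlocks_map, hUp, hUq, Matrix.mul_assoc, -Matrix.coe_units_inv]

theorem EP_good_of : ∀ (N : ℕ) (p : ℤ[X]), p.natDegree ≤ N → p.Monic →
    (∀ q : ℤ[X], Irreducible q → q ∣ p → Squarefree (q.map (Int.castRingHom ℂ))) →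
    EPGood p := by
  intro N
  induction N with
  | zero => intro p hdeg hp _
            rw [hp.natDegree_eq_zero.mp (Nat.le_zero.mp hdeg)]
            exact EP_good_one
  | succ N ih =>
    intro p hdeg hp hsf
    rcases Nat.eq_zero_or_pos p.natDegree with h0 | h0
    · rw [hp.natDegree_eq_zero.mp h0]; exact EP_good_one
    have hpu : ¬ IsUnit p := by
      intro hu
      rw [Polynomial.natDegree_eq_zero_of_isUnit hu] at h0
      exact absurd rfl h0.ne'
    obtain ⟨q₀, hq₀irr, hq₀dvd⟩ :=
      WfDvdMonoid.exists_irreducible_factor hpu hp.ne_zero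
    -- normalize q₀ to be monic
    obtain ⟨q, hqirr, hqdvd, hqmon⟩ :
        ∃ q : ℤ[X], Irreducible q ∧ q ∣ p ∧ q.Monic := by
      obtain ⟨r, hr⟩ := id hq₀dvd
      have hlc : IsUnit q₀.leadingCoeff := by
        have : q₀.leadingCoeff * r.leadingCoeff = 1 := by
          rw [← Polynomial.leadingCoeff_mul, ← hr, hp.leadingCoeff]
        exact IsUnit.of_mul_eq_one _ this
      rcases Int.isUnit_iff.mp hlc with h1 | h1
      · exact ⟨q₀, hq₀irr, hq₀dvd, h1⟩
      · refine ⟨-q₀, ?_, (neg_dvd).mpr hq₀dvd, ?_⟩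
        · exact ((Associated.neg_right (Associated.refl q₀))).irreducible hq₀irr
        · show (-q₀).leadingCoeff = 1
          rw [Polynomial.leadingCoeff_neg, h1, neg_neg]
    obtain ⟨r, hr⟩ := hqdvd
    have hrmon : r.Monic := by
      have := hr ▸ hp
      exact hqmon.of_mul_monic_left this
    have hqpos : 0 < q.natDegree := by
      rcases Nat.eq_zero_or_pos q.natDegree with h | h
      · exact absurd (hqmon.natDegree_eq_zero.mp h ▸ hqirr)
          not_irreducible_one
      · exact h
    have hdegs : p.natDegree = q.natDegree + r.natDegree := by
      rw [hr, hqmon.natDegree_mul hrmon]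
    have hrle : r.natDegree ≤ N := by omega
    have hrgood : EPGood r := ih r hrle hrmon
      (fun s hs hsd => hsf s hs (hsd.trans ⟨q, by rw [hr]; ring⟩))
    have hqgood : EPGood q := EP_good_irred q hqmon hqpos (hsf q hqirr ⟨r, hr⟩)
    rw [hr]
    exact EP_good_mul q r hqgood hrgood

theorem EP_f0_sf (f₀ : ℤ[X]) (hf₀monic : f₀.Monic) (hf₀deg : f₀.natDegree = 3)
    (α : ℝ) (hαroot : (f₀.map (Int.castRingHom ℝ)).IsRoot α)
    (hαuniq : ∀ x : ℝ, (f₀.map (Int.castRingHom ℝ)).IsRoot x → x = α)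
    (hαpos : 0 < α) (hα1 : α ≠ 1) (hf₀zero : f₀.eval 0 = -1) :
    Squarefree (f₀.map (Int.castRingHom ℂ)) := by
  classical
  set F : ℂ[X] := f₀.map (Int.castRingHom ℂ) with hFdef
  have hFmonic : F.Monic := hf₀monic.map _
  have hF0 : F ≠ 0 := hFmonic.ne_zero
  have hFdeg : F.natDegree = 3 := by
    rw [hFdef, hf₀monic.natDegree_map, hf₀deg]
  have hFsplits : F.Splits := IsAlgClosed.splits F
  have hcard : F.roots.card = 3 := by
    rw [(splits_iff_card_roots).mp hFsplits, hFdeg]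
  have hFconj : F.map (starRingEnd ℂ) = F := by
    rw [hFdef, Polynomial.map_map]
    congr 1
    exact Subsingleton.elim _ _
  have hroots_conj : F.roots.map (starRingEnd ℂ) = F.roots := by
    conv_rhs => rw [← hFconj]
    exact (hFsplits.roots_map (starRingEnd ℂ)).symm
  have hcount : ∀ z : ℂ, F.roots.count ((starRingEnd ℂ) z) = F.roots.count z := by
    intro z
    conv_lhs => rw [← hroots_conj]
    exact Multiset.count_map_eq_count' _ _ (RingHom.injective _) z
  have hreal : ∀ z ∈ F.roots, z.im = 0 → z = (α : ℂ) := by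
    intro z hz him
    have hzre : z = ((z.re : ℝ) : ℂ) := by
      apply Complex.ext <;> simp [him]
    have hzroot : F.IsRoot z := (mem_roots hF0).mp hz
    have hcomp : (Complex.ofRealHom).comp (Int.castRingHom ℝ) = Int.castRingHom ℂ :=
      Subsingleton.elim _ _
    have hFre : F = (f₀.map (Int.castRingHom ℝ)).map (Complex.ofRealHom) := by
      rw [hFdef, Polynomial.map_map, hcomp]
    have key : ((f₀.map (Int.castRingHom ℝ)).map Complex.ofRealHom).eval
        (Complex.ofRealHom z.re) = Complex.ofRealHom ((f₀.map (Int.castRingHom ℝ)).eval z.re) := by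
      rw [Polynomial.eval_map, Polynomial.eval₂_at_apply]
    have hz0 : ((f₀.map (Int.castRingHom ℝ)).map Complex.ofRealHom).eval
        (Complex.ofRealHom z.re) = 0 := by
      rw [← hFre]
      show F.eval ((z.re : ℝ) : ℂ) = 0
      rw [← hzre]
      exact hzroot
    have : (f₀.map (Int.castRingHom ℝ)).eval z.re = 0 := by
      have h2 := key.symm.trans hz0
      have h3 : ((eval z.re (map (Int.castRingHom ℝ) f₀) : ℝ) : ℂ) = 0 := by simpa using h2
      exact_mod_cast h3
    rw [hzre, hαuniq z.re this]
  have hnodup : F.roots.Nodup := by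
    by_contra hnd
    obtain ⟨z, hz2⟩ : ∃ z : ℂ, 2 ≤ F.roots.count z := by
      rw [Multiset.nodup_iff_count_le_one] at hnd
      push_neg at hnd
      obtain ⟨z, hz⟩ := hnd
      exact ⟨z, by omega⟩
    have hzmem : z ∈ F.roots := Multiset.count_pos.mp (by omega)
    by_cases him : z.im = 0
    · have hzα : z = (α : ℂ) := hreal z hzmem him
      by_cases hw : ∃ w ∈ F.roots, w.im ≠ 0
      · obtain ⟨w, hwmem, hwim⟩ := hw
        have hwconj : w ≠ (starRingEnd ℂ) w := by
          intro hcontra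
          exact hwim (Complex.conj_eq_iff_im.mp hcontra.symm)
        have hwz : w ≠ z := fun hcontra => hwim (hcontra ▸ him)
        have hwcz : (starRingEnd ℂ) w ≠ z := by
          intro hcontra
          apply hwim
          have h1 : w = (starRingEnd ℂ) z := by
            rw [← hcontra]; simp
          rw [h1]
          simp [him]
        set T : Multiset ℂ := Multiset.replicate 2 z + (w ::ₘ {(starRingEnd ℂ) w}) with hT
        have hle : T ≤ F.roots := by
          rw [Multiset.le_iff_count]
          intro a
          have hcw : 1 ≤ F.roots.count w := Multiset.one_le_count_iff_mem.mpr hwmem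
          have hccw : 1 ≤ F.roots.count ((starRingEnd ℂ) w) := by
            rw [hcount]; exact hcw
          have hcountT : T.count a = (if z = a then 2 else 0) +
              ((if a = (starRingEnd ℂ) w then 1 else 0) + (if a = w then 1 else 0)) := by
            rw [hT, Multiset.count_add, Multiset.count_replicate, Multiset.count_cons,
              Multiset.count_singleton]
          rw [hcountT]
          by_cases ha1 : a = z
          · subst ha1
            rw [if_pos rfl, if_neg (fun hc => hwcz hc.symm), if_neg (fun hc => hwz hc.symm)]
            omega
          · rw [if_neg (fun hc => ha1 hc.symm)]
            by_cases ha2 : a = w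
            · subst ha2
              rw [if_neg hwconj, if_pos rfl]
              omega
            · rw [if_neg ha2]
              by_cases ha3 : a = (starRingEnd ℂ) w
              · subst ha3
                rw [if_pos rfl]
                omega
              · rw [if_neg ha3]
                omega
        have hcontra := Multiset.card_le_card hle
        rw [hcard, hT] at hcontra
        simp at hcontra
      · push_neg at hw
        have hrep : F.roots = Multiset.replicate 3 ((α : ℝ) : ℂ) := by
          rw [Multiset.eq_replicate]
          exact ⟨hcard, fun b hb => hreal b hb (hw b hb)⟩
        have hFeq : F = (X - C ((α : ℝ) : ℂ)) ^ 3 := by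
          have hprod := hFsplits.eq_prod_roots_of_monic hFmonic
          rw [hrep] at hprod
          rw [hprod, Multiset.map_replicate, Multiset.prod_replicate]
        have heval : F.eval 0 = -1 := by
          rw [hFdef, Polynomial.eval_map, Polynomial.eval₂_at_zero,
            Polynomial.coeff_zero_eq_eval_zero, hf₀zero]
          simp
        rw [hFeq] at heval
        simp at heval
        have hα3 : (α : ℂ) ^ 3 = 1 := by
          have h' := heval
          rw [show ((-(α:ℂ)) ^ 3 : ℂ) = -((α:ℂ) ^ 3) by ring] at h'
          exact neg_injective h'
        have hα3' : α ^ 3 = 1 := by exact_mod_cast hα3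
        have : α = 1 := by nlinarith [sq_nonneg (α - 1), sq_nonneg (α + 1)]
        exact hα1 this
    · have hzconj : z ≠ (starRingEnd ℂ) z := by
        intro hcontra
        exact him (Complex.conj_eq_iff_im.mp hcontra.symm)
      set T : Multiset ℂ := Multiset.replicate 2 z + Multiset.replicate 2 ((starRingEnd ℂ) z)
        with hT
      have hle : T ≤ F.roots := by
        rw [Multiset.le_iff_count]
        intro a
        have hc2 : 2 ≤ F.roots.count ((starRingEnd ℂ) z) := by rw [hcount]; exact hz2
        have hcountT : T.count a = (if z = a then 2 else 0) +
            (if (starRingEnd ℂ) z = a then 2 else 0) := by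
          rw [hT, Multiset.count_add, Multiset.count_replicate, Multiset.count_replicate]
        rw [hcountT]
        by_cases ha1 : a = z
        · subst ha1
          rw [if_pos rfl, if_neg (fun hc => hzconj hc.symm)]
          omega
        · rw [if_neg (fun hc => ha1 hc.symm)]
          by_cases ha2 : a = (starRingEnd ℂ) z
          · subst ha2
            rw [if_pos rfl]
            omega
          · rw [if_neg (fun hc => ha2 hc.symm)]
            omega
      have hcontra := Multiset.card_le_card hle
      rw [hcard, hT] at hcontra
      simp at hcontra
  exact ((Polynomial.nodup_roots_iff_of_splits hF0 hFsplits).mp hnodup).squarefree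


theorem EP_matrix_from_polynomial (n : ℕ) (hn : 1 < n) (P f₀ h : ℤ[X])
    (hPmonic : P.Monic) (hPdeg : P.natDegree = 2 * n + 1) (hsplit : P = f₀ * h)
    (hf₀monic : f₀.Monic) (hf₀deg : f₀.natDegree = 3)
    (α : ℝ) (hαroot : (f₀.map (Int.castRingHom ℝ)).IsRoot α)
    (hαuniq : ∀ x : ℝ, (f₀.map (Int.castRingHom ℝ)).IsRoot x → x = α)
    (hαpos : 0 < α) (hα1 : α ≠ 1) (hf₀zero : f₀.eval 0 = -1)
    (hhmonic : h.Monic) (hhself : h.reverse = h)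
    (hhnoreal : ∀ x : ℝ, ¬ (h.map (Int.castRingHom ℝ)).IsRoot x)
    (hhsep : ∀ q : ℤ[X], Irreducible q → q ∣ h →
      Squarefree (q.map (Int.castRingHom ℂ))) :
    ∃ M : Matrix (Fin (2 * n + 1)) (Fin (2 * n + 1)) ℤ,
      M.det = 1 ∧ M.charpoly = P ∧
      ∃ (U : (Matrix (Fin (2 * n + 1)) (Fin (2 * n + 1)) ℂ)ˣ)
        (d : Fin (2 * n + 1) → ℂ),
        M.map (Int.cast : ℤ → ℂ) =
          (U : Matrix _ _ ℂ) * Matrix.diagonal d * ((U⁻¹ : _ˣ) : Matrix _ _ ℂ) := by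
  classical
  have hf0sf : Squarefree (f₀.map (Int.castRingHom ℂ)) :=
    EP_f0_sf f₀ hf₀monic hf₀deg α hαroot hαuniq hαpos hα1 hf₀zero
  have hsf : ∀ q : ℤ[X], Irreducible q → q ∣ P →
      Squarefree (q.map (Int.castRingHom ℂ)) := by
    intro q hq hdvd
    have hprime : Prime q := UniqueFactorizationMonoid.irreducible_iff_prime.mp hq
    rw [hsplit] at hdvd
    rcases hprime.2.2 _ _ hdvd with h1 | h1
    · exact hf0sf.squarefree_of_dvd (Polynomial.map_dvd _ h1)
    · exact hhsep q hq h1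
  obtain ⟨ι, hfin, hdec, M₀, hchar, U₀, d₀, hU₀⟩ :=
    EP_good_of P.natDegree P le_rfl hPmonic hsf
  have hcardι : Fintype.card ι = 2 * n + 1 := by
    have h1 : M₀.charpoly.natDegree = Fintype.card ι :=
      Matrix.charpoly_natDegree_eq_dim M₀
    rw [hchar, hPdeg] at h1
    omega
  let e : ι ≃ Fin (2 * n + 1) := Fintype.equivFinOfCardEq hcardι
  have hchar2 : (Matrix.reindex e e M₀).charpoly = P := by
    rw [Matrix.charpoly_reindex, hchar]
  refine ⟨Matrix.reindex e e M₀, ?_, hchar2, ?_⟩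
  · -- determinant
    have hh0 : h.coeff 0 = 1 := by
      conv_lhs => rw [← hhself]
      rw [Polynomial.coeff_zero_reverse]
      exact hhmonic
    have hP0 : P.coeff 0 = -1 := by
      rw [hsplit, Polynomial.mul_coeff_zero, Polynomial.coeff_zero_eq_eval_zero,
        hf₀zero, hh0, mul_one]
    have hdet := Matrix.det_eq_sign_charpoly_coeff (Matrix.reindex e e M₀)
    rw [hchar2, hP0] at hdet
    have hodd : ((-1 : ℤ)) ^ (Fintype.card (Fin (2 * n + 1))) = -1 := by
      rw [Fintype.card_fin]
      exact Odd.neg_one_pow ⟨n, by ring⟩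
    rw [hdet, hodd]
    ring
  · -- diagonalizability
    set Φ := Matrix.reindexAlgEquiv ℂ ℂ e with hΦ
    refine ⟨⟨Φ (U₀ : Matrix ι ι ℂ), Φ ((U₀⁻¹ : _ˣ) : Matrix ι ι ℂ), ?_, ?_⟩,
      d₀ ∘ e.symm, ?_⟩
    · rw [← map_mul, Units.mul_inv, map_one]
    · rw [← map_mul, Units.inv_mul, map_one]
    · show (Matrix.reindex e e M₀).map (Int.cast : ℤ → ℂ) =
        Φ (U₀ : Matrix ι ι ℂ) * Matrix.diagonal (d₀ ∘ e.symm) *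
          Φ ((U₀⁻¹ : _ˣ) : Matrix ι ι ℂ)
      have hmapre : (Matrix.reindex e e M₀).map (Int.cast : ℤ → ℂ) =
          Φ (M₀.map (Int.cast : ℤ → ℂ)) := by
        ext i j
        simp [hΦ, Matrix.reindexAlgEquiv_apply, Matrix.reindex_apply,
          Matrix.submatrix_apply, Matrix.map_apply]
      have hdiagre : Φ (Matrix.diagonal d₀) = Matrix.diagonal (d₀ ∘ e.symm) := by
        ext i j
        by_cases hij : i = j
        · subst hij
          simp [hΦ, Matrix.reindexAlgEquiv_apply, Matrix.reindex_apply,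
            Matrix.submatrix_apply, Matrix.diagonal_apply]
        · have : e.symm i ≠ e.symm j := fun hc => hij (e.symm.injective hc)
          simp [hΦ, Matrix.reindexAlgEquiv_apply, Matrix.reindex_apply,
            Matrix.submatrix_apply, Matrix.diagonal_apply, hij, this]
      rw [hmapre, hU₀, map_mul, map_mul, hdiagre]
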